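/- Let 𝔧 be a strongly stable ideal in R and 𝔊 a [𝔧,m]-marked set. Then 𝔊 is a [𝔧,m]-marked basis if and only if: (i) for every f_α ∈ 𝔊 and every variable x_i > min(x^α), the polynomial x_i f_α reduces to 0 by 𝔊_∗-reduction; and (ii) for every monomial x^β ∈ 𝔧_{≤m} \ B_𝔧, x^β reduces by 𝔊_∗-reduction to a polynomial g_β with supp(g_β) ⊆ N(𝔧)_{≤m}. -/

import Mathlib

open MvPolynomial

namespace Paper

/-- Monomials (exponent vectors) in `N` variables. -/
abbrev Mon (N : ℕ) := Fin N →₀ ℕ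

variable {N : ℕ}

/-- Total degree of a monomial. -/
def mdeg (u : Mon N) : ℕ := u.sum fun _ e => e

/-- `BorelStep a b` : `b` is obtained from `a` by one increasing elementary move,
i.e. `x^a · x_j = x^b · x_i` with `i < j`. -/
def BorelStep (a b : Mon N) : Prop :=
  ∃ i j : Fin N, i < j ∧ a + Finsupp.single j 1 = b + Finsupp.single i 1

/-- `BorelLt a b` : `a <_B b`, i.e. `b` is obtained from `a` by a nonempty
sequence of increasing elementary moves. -/
def BorelLt (a b : Mon N) : Prop := Relation.TransGen BorelStep a b

/-- A (combinatorially encoded) monomial ideal: a set of monomials closed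
under multiplication by monomials. -/
def MonIdeal (J : Set (Mon N)) : Prop := ∀ u ∈ J, ∀ d : Mon N, u + d ∈ J

/-- A strongly stable monomial ideal. -/
def StronglyStable (J : Set (Mon N)) : Prop :=
  MonIdeal J ∧ ∀ b ∈ J, ∀ a, BorelLt b a → a ∈ J

/-- The minimal monomial basis `B_J` of a monomial ideal. -/
def MinBasis (J : Set (Mon N)) : Set (Mon N) :=
  {u | u ∈ J ∧ ∀ v ∈ J, v ≤ u → v = u}

/-- `min(x^a) ≥ max(x^h)`. -/
def StarCond (a h : Mon N) : Prop :=
  ∀ i j : Fin N, a i ≠ 0 → h j ≠ 0 → j ≤ i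


variable (K : Type) [Field K]

/-- The monomial `x^u` as a polynomial. -/
noncomputable def mono {N : ℕ} (u : Mon N) : MvPolynomial (Fin N) K :=
  MvPolynomial.monomial u (1 : K)

/-- The (actual) monomial ideal of `S` spanned by a set of monomials. -/
noncomputable def idealOf {N : ℕ} (J : Set (Mon N)) : Ideal (MvPolynomial (Fin N) K) :=
  Ideal.span (mono K '' J)

/-- The irrelevant maximal ideal `(x_0, …, x_n)`. -/
noncomputable def irrel (N : ℕ) : Ideal (MvPolynomial (Fin N) K) :=
  Ideal.span (Set.range MvPolynomial.X)

/-- The saturation `I^sat = ⋃_j (I : (x_0,…,x_n)^j)`. -/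
noncomputable def satIdeal {N : ℕ} (I : Ideal (MvPolynomial (Fin N) K)) :
    Ideal (MvPolynomial (Fin N) K) :=
  ⨆ k : ℕ, Submodule.colon I ((irrel K N ^ k : Ideal (MvPolynomial (Fin N) K)) : Set (MvPolynomial (Fin N) K))

/-- The satiety of a homogeneous ideal: the smallest `m` such that
`I_t = (I^sat)_t` for all `t ≥ m`. -/
noncomputable def satiety {N : ℕ} (I : Ideal (MvPolynomial (Fin N) K)) : ℕ :=
  sInf {m | ∀ t, m ≤ t → ∀ p : MvPolynomial (Fin N) K,
    p.IsHomogeneous t → (p ∈ I ↔ p ∈ satIdeal K I)}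

/-- The saturation of a combinatorial monomial ideal. -/
def msat {N : ℕ} (J : Set (Mon N)) : Set (Mon N) :=
  {u | ∃ k : ℕ, ∀ d : Mon N, mdeg d = k → u + d ∈ J}

/-- The satiety of a combinatorial monomial ideal. -/
noncomputable def msatiety {N : ℕ} (J : Set (Mon N)) : ℕ :=
  sInf {m | ∀ u : Mon N, m ≤ mdeg u → (u ∈ J ↔ u ∈ msat J)}

/-- A non-homogeneous `𝔧`-marked set: marked polynomials `f_α` with pairwise
distinct head terms forming `B_𝔧` and tails supported outside `𝔧`. -/
def NHMarkedSet {N : ℕ} (𝔧 : Set (Mon N)) (f : Mon N → MvPolynomial (Fin N) K) : Prop :=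
  ∀ α ∈ MinBasis 𝔧,
    MvPolynomial.coeff α (f α) = 1 ∧
    ∀ u ∈ (f α).support, u ≠ α → u ∉ 𝔧

/-- One step of the `𝔊_∗`-reduction: the monomial `x^γ = x^α ∗_𝔧 x^η` of the
support of `g` is replaced by `x^η · T(f_α)`. -/
def RStep {N : ℕ} (𝔧 : Set (Mon N)) (f : Mon N → MvPolynomial (Fin N) K)
    (g g₁ : MvPolynomial (Fin N) K) : Prop :=
  ∃ γ α η : Mon N, γ ∈ g.support ∧ γ ∈ 𝔧 ∧ α ∈ MinBasis 𝔧 ∧ γ = α + η ∧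
    StarCond α η ∧
    g₁ = g - MvPolynomial.coeff γ g • (mono K η * f α)

/-- The `𝔊_∗`-reduction relation (reflexive-transitive closure of `RStep`). -/
def Reduces {N : ℕ} (𝔧 : Set (Mon N)) (f : Mon N → MvPolynomial (Fin N) K) :
    MvPolynomial (Fin N) K → MvPolynomial (Fin N) K → Prop :=
  Relation.ReflTransGen (RStep K 𝔧 f)

/-- `g` is reduced: `supp(g) ∩ 𝔧 = ∅`. -/
def IsReducedPoly {N : ℕ} (𝔧 : Set (Mon N)) (g : MvPolynomial (Fin N) K) : Prop :=
  ∀ u ∈ g.support, u ∉ 𝔧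

/-- A `[𝔧,m]`-marked set: a n.h. `𝔧`-marked set whose tails are supported in
`N(𝔧)_{≤ max{m,|α|}}`. -/
def JmMarkedSet {N : ℕ} (𝔧 : Set (Mon N)) (m : ℕ)
    (f : Mon N → MvPolynomial (Fin N) K) : Prop :=
  ∀ α ∈ MinBasis 𝔧,
    MvPolynomial.coeff α (f α) = 1 ∧
    ∀ u ∈ (f α).support, u ≠ α → (u ∉ 𝔧 ∧ mdeg u ≤ max m (mdeg α))

/-- The ideal `(𝔊)` generated by a marked set. -/
noncomputable def idealG {N : ℕ} (𝔧 : Set (Mon N))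
    (f : Mon N → MvPolynomial (Fin N) K) : Ideal (MvPolynomial (Fin N) K) :=
  Ideal.span (f '' MinBasis 𝔧)

/-- A `[𝔧,m]`-completion of `𝔊`: marked polynomials `f_β ∈ (𝔊)` with pairwise
distinct head terms the monomials of `𝔧_{≤m} \ B_𝔧` and tails in `N(𝔧)_{≤m}`. -/
def IsCompletion {N : ℕ} (𝔧 : Set (Mon N)) (m : ℕ)
    (f h : Mon N → MvPolynomial (Fin N) K) : Prop :=
  ∀ β : Mon N, β ∈ 𝔧 → mdeg β ≤ m → β ∉ MinBasis 𝔧 →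
    h β ∈ idealG K 𝔧 f ∧
    MvPolynomial.coeff β (h β) = 1 ∧
    ∀ u ∈ (h β).support, u ≠ β → (u ∉ 𝔧 ∧ mdeg u ≤ m)

/-- `g'` is a `[𝔧,m]`-reduced form of `g` modulo `(𝔊)`. -/
def IsReducedForm {N : ℕ} (𝔧 : Set (Mon N)) (m : ℕ)
    (f : Mon N → MvPolynomial (Fin N) K)
    (g g' : MvPolynomial (Fin N) K) : Prop :=
  (∀ u ∈ g'.support, u ∉ 𝔧 ∧ mdeg u ≤ max m g.totalDegree) ∧
  g - g' ∈ idealG K 𝔧 f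

/-- `R_{≤ t}`: the `K`-subspace of polynomials of degree at most `t`. -/
noncomputable def degLE (N : ℕ) (t : ℕ) : Submodule K (MvPolynomial (Fin N) K) where
  carrier := {g | ∀ u ∈ g.support, mdeg u ≤ t}
  zero_mem' := by simp
  add_mem' := by
    intro a b ha hb u hu
    rcases Finset.mem_union.mp (MvPolynomial.support_add hu) with h | h
    · exact ha u h
    · exact hb u h
  smul_mem' := by
    intro c a ha u hu
    exact ha u (MvPolynomial.support_smul hu)

/-- `⟨N(𝔧)_{≤t}⟩`: the `K`-span of the monomials outside `𝔧` of degree `≤ t`. -/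
noncomputable def spanNLE {N : ℕ} (𝔧 : Set (Mon N)) (t : ℕ) :
    Submodule K (MvPolynomial (Fin N) K) :=
  Submodule.span K (mono K '' {u : Mon N | u ∉ 𝔧 ∧ mdeg u ≤ t})

/-- `(𝔊)_{≤t}`: the `K`-subspace of elements of `(𝔊)` of degree `≤ t`. -/
noncomputable def GleSub {N : ℕ} (𝔧 : Set (Mon N))
    (f : Mon N → MvPolynomial (Fin N) K) (t : ℕ) :
    Submodule K (MvPolynomial (Fin N) K) :=
  (idealG K 𝔧 f).restrictScalars K ⊓ degLE K N t

/-- A `[𝔧,m]`-marked basis: a `[𝔧,m]`-marked set with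
`R_{≤t} = ⟨N(𝔧)_{≤t}⟩ ⊕ (𝔊)_{≤t}` for all `t ≥ m`. -/
def JmMarkedBasis {N : ℕ} (𝔧 : Set (Mon N)) (m : ℕ)
    (f : Mon N → MvPolynomial (Fin N) K) : Prop :=
  JmMarkedSet K 𝔧 m f ∧
  ∀ t, m ≤ t →
    Disjoint (spanNLE K 𝔧 t) (GleSub K 𝔧 f t) ∧
    spanNLE K 𝔧 t ⊔ GleSub K 𝔧 f t = degLE K N t

/-! ### Part A: basics on `mdeg` and the top-lex measure `ν` -/

section PartA

variable {N : ℕ}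

lemma mdeg_add (a b : Mon N) : mdeg (a + b) = mdeg a + mdeg b := by
  classical
  simpa [mdeg] using Finsupp.sum_add_index' (h := fun _ e => e) (fun _ => rfl) (fun _ _ _ => rfl)

lemma mdeg_eq_sum (a : Mon N) : mdeg a = ∑ i ∈ a.support, a i := rfl

lemma mdeg_single (i : Fin N) (k : ℕ) : mdeg (Finsupp.single i k) = k := by
  simp [mdeg, Finsupp.sum_single_index]

lemma mon_le_iff {a b : Mon N} : a ≤ b ↔ ∀ i, a i ≤ b i := Finsupp.le_def

lemma mon_exists_add_of_le {a b : Mon N} (h : a ≤ b) : ∃ c : Mon N, b = a + c :=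
  ⟨b - a, by ext i; have := (mon_le_iff.mp h) i; simp; omega⟩

lemma mdeg_le_of_le {a b : Mon N} (h : a ≤ b) : mdeg a ≤ mdeg b := by
  obtain ⟨c, rfl⟩ := mon_exists_add_of_le h
  simp [mdeg_add]

/-- The "top-lex" measure: lexicographic comparison of exponents, the variable of
largest index being the most significant. -/
def nu (η : Mon N) : Lex ((Fin N)ᵒᵈ →₀ ℕ) :=
  toLex (Finsupp.equivMapDomain (OrderDual.toDual) η)

lemma nu_apply (η : Mon N) (i : Fin N) :
    ofLex (nu η) (OrderDual.toDual i) = η i := rfl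

lemma nu_lt_iff {a b : Mon N} :
    nu a < nu b ↔ ∃ i : Fin N, (∀ j : Fin N, i < j → a j = b j) ∧ a i < b i := by
  constructor
  · rintro ⟨j, hj, hlt⟩
    exact ⟨OrderDual.ofDual j, fun k hk => hj (OrderDual.toDual k) hk, hlt⟩
  · rintro ⟨i, hi, hlt⟩
    exact ⟨OrderDual.toDual i, fun d hd => hi (OrderDual.ofDual d) hd, hlt⟩

lemma nu_le_of_le {a b : Mon N} (h : a ≤ b) : nu a ≤ nu b := by
  apply Finsupp.toLex_monotone
  intro i
  exact (mon_le_iff.mp h) (OrderDual.ofDual i)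

lemma nu_inj {a b : Mon N} (h : nu a = nu b) : a = b := by
  have h2 := toLex.injective h
  ext i
  exact DFunLike.congr_fun h2 (OrderDual.toDual i)

lemma nu_add_lt_add_right {a b : Mon N} (h : nu a < nu b) (c : Mon N) :
    nu (a + c) < nu (b + c) := by
  rw [nu_lt_iff] at h ⊢
  obtain ⟨i, hi, hlt⟩ := h
  exact ⟨i, fun j hj => by simp [Finsupp.add_apply, hi j hj], by simp [Finsupp.add_apply]; omega⟩

lemma nu_wf : WellFounded (fun a b : Mon N => nu a < nu b) := by
  have h1 : WellFoundedGT (Fin N)ᵒᵈ := Finite.to_wellFoundedGT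
  have h : WellFoundedLT (Lex ((Fin N)ᵒᵈ →₀ ℕ)) := Finsupp.Lex.wellFoundedLT
  exact InvImage.wf nu h.wf

end PartA
/-! ### Part B: Pommaret decomposition for strongly stable ideals -/

section PartB

variable {N : ℕ} {J : Set (Mon N)}

lemma starCond_zero_right (a : Mon N) : StarCond a 0 := by
  intro i j _ hj; simp at hj

lemma mdeg_eq_zero {a : Mon N} (h : mdeg a = 0) : a = 0 := by
  ext i
  by_cases hi : i ∈ a.support
  · exact (Finset.sum_eq_zero_iff.mp h) i hi
  · simpa using Finsupp.notMem_support_iff.mp hi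

lemma zero_mem_minBasis (h0 : (0 : Mon N) ∈ J) : (0 : Mon N) ∈ MinBasis J :=
  ⟨h0, fun v _ hv => le_antisymm hv zero_le⟩

lemma star_eta_zero {α η : Mon N} (hst : StarCond α η) {s : Fin N} (hαs : α s ≠ 0)
    {i : Fin N} (hi : s < i) : η i = 0 := by
  by_contra h
  exact absurd (hst s i hαs h) (not_le.mpr hi)

theorem pommaret_exists_aux (hss : StronglyStable J) :
    ∀ d : ℕ, ∀ γ ∈ J, mdeg γ ≤ d →
      ∃ α η : Mon N, α ∈ MinBasis J ∧ γ = α + η ∧ StarCond α η := by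
  intro d
  induction d with
  | zero =>
    intro γ hγ hd
    have h0 : γ = 0 := mdeg_eq_zero (Nat.le_zero.mp hd)
    subst h0
    exact ⟨0, 0, zero_mem_minBasis hγ, by simp, starCond_zero_right 0⟩
  | succ d ih =>
    intro γ hγ hd
    by_cases hB : γ ∈ MinBasis J
    · exact ⟨γ, 0, hB, by simp, starCond_zero_right γ⟩
    · have hv : ∃ v ∈ J, v ≤ γ ∧ v ≠ γ := by
        by_contra hcon
        push_neg at hcon
        exact hB ⟨hγ, fun v hvJ hvle => hcon v hvJ hvle⟩
      obtain ⟨v, hvJ, hvle, hvne⟩ := hv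
      have hk : ∃ k, v k < γ k := by
        by_contra hcon
        push_neg at hcon
        exact hvne (le_antisymm hvle (mon_le_iff.mpr hcon))
      obtain ⟨k, hk⟩ := hk
      have hγk : γ k ≠ 0 := by omega
      have hne : γ.support.Nonempty := ⟨k, Finsupp.mem_support_iff.mpr hγk⟩
      set ℓ := γ.support.min' hne with hℓ
      have hγℓ : γ ℓ ≠ 0 := Finsupp.mem_support_iff.mp (γ.support.min'_mem hne)
      have hmin : ∀ i, γ i ≠ 0 → ℓ ≤ i := fun i hi =>
        Finset.min'_le _ i (Finsupp.mem_support_iff.mpr hi)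
      set δ := γ - Finsupp.single ℓ 1 with hδ
      have hγδ : γ = δ + Finsupp.single ℓ 1 := by
        ext i
        simp only [hδ, Finsupp.add_apply, Finsupp.tsub_apply, Finsupp.single_apply]
        by_cases h : ℓ = i
        · rw [← h]; simp; omega
        · simp [h]
      have h1 : γ - Finsupp.single k 1 ∈ J := by
        have hle : v ≤ γ - Finsupp.single k 1 := by
          apply mon_le_iff.mpr
          intro i
          have h2 := mon_le_iff.mp hvle i
          rw [Finsupp.tsub_apply]
          by_cases h : k = i
          · rw [← h] at h2 ⊢; simp; omega
          · simp [Finsupp.single_apply, h]; omega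
        obtain ⟨c, hc⟩ := mon_exists_add_of_le hle
        rw [hc]
        exact hss.1 v hvJ c
      have hδJ : δ ∈ J := by
        by_cases hkl : k = ℓ
        · rw [hδ, ← hkl]; exact h1
        · have hklt : ℓ < k := lt_of_le_of_ne (hmin k hγk) (Ne.symm hkl)
          refine hss.2 _ h1 δ (Relation.TransGen.single ⟨ℓ, k, hklt, ?_⟩)
          ext i
          simp only [hδ, Finsupp.add_apply, Finsupp.tsub_apply, Finsupp.single_apply]
          by_cases h1' : k = i
          · rw [← h1']
            have hlk : ℓ ≠ k := fun h => hkl h.symm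
            simp [hlk]
            omega
          · by_cases h2' : ℓ = i
            · rw [← h2']
              simp [hkl]
              omega
            · simp [h1', h2']
      have hdd : mdeg δ ≤ d := by
        have := mdeg_add δ (Finsupp.single ℓ 1)
        rw [← hγδ, mdeg_single] at this
        omega
      obtain ⟨α, η, hα, hdec, hstar⟩ := ih δ hδJ hdd
      refine ⟨α, η + Finsupp.single ℓ 1, hα, by rw [hγδ, hdec, add_assoc], ?_⟩
      intro i j hi hj
      by_cases hjl : j = ℓ
      · subst hjl
        apply hmin
        have hδi : δ i ≠ 0 := by
          rw [hdec]; simp [Finsupp.add_apply]; omega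
        rw [hγδ]; simp [Finsupp.add_apply]; omega
      · apply hstar i j hi
        simpa [Finsupp.add_apply, Finsupp.single_apply, Ne.symm hjl] using hj

theorem pommaret_exists (hss : StronglyStable J) {γ : Mon N} (hγ : γ ∈ J) :
    ∃ α η : Mon N, α ∈ MinBasis J ∧ γ = α + η ∧ StarCond α η :=
  pommaret_exists_aux hss (mdeg γ) γ hγ le_rfl

/-- minimal index of the support -/
noncomputable def minidx (a : Mon N) (h : a ≠ 0) : Fin N :=
  a.support.min' (Finsupp.support_nonempty_iff.mpr h)

lemma minidx_ne_zero (a : Mon N) (h : a ≠ 0) : a (minidx a h) ≠ 0 :=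
  Finsupp.mem_support_iff.mp (a.support.min'_mem _)

lemma minidx_le (a : Mon N) (h : a ≠ 0) {i : Fin N} (hi : a i ≠ 0) : minidx a h ≤ i :=
  Finset.min'_le _ i (Finsupp.mem_support_iff.mpr hi)

private lemma pom_le_aux1 {α η α' η' : Mon N} (hst : StarCond α η) (hst' : StarCond α' η')
    (heq : α + η = α' + η') (hα0 : α ≠ 0) (hα'0 : α' ≠ 0)
    (hlt : minidx α hα0 < minidx α' hα'0) : α' ≤ α := by
  set s := minidx α hα0
  set s' := minidx α' hα'0
  apply mon_le_iff.mpr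
  intro i
  rcases lt_or_ge i s' with h | h
  · have : α' i = 0 := by
      by_contra hc
      exact absurd (minidx_le α' hα'0 hc) (not_le.mpr h)
    omega
  · have hηi : η i = 0 := star_eta_zero hst (minidx_ne_zero α hα0) (lt_of_lt_of_le hlt h)
    have hcoord := DFunLike.congr_fun heq i
    simp only [Finsupp.add_apply] at hcoord
    omega

private lemma pom_le_aux2 {α η α' η' : Mon N} (hst : StarCond α η) (hst' : StarCond α' η')
    (heq : α + η = α' + η') (hα0 : α ≠ 0) (hα'0 : α' ≠ 0)
    (hse : minidx α hα0 = minidx α' hα'0)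
    (hle : α (minidx α hα0) ≤ α' (minidx α hα0)) : α ≤ α' := by
  set s := minidx α hα0 with hs
  apply mon_le_iff.mpr
  intro i
  rcases lt_trichotomy i s with h | h | h
  · have : α i = 0 := by
      by_contra hc
      exact absurd (minidx_le α hα0 hc) (not_le.mpr h)
    omega
  · subst h; exact hle
  · have hηi : η i = 0 := star_eta_zero hst (minidx_ne_zero α hα0) h
    have hη'i : η' i = 0 := star_eta_zero hst' (minidx_ne_zero α' hα'0) (hse ▸ h)
    have hcoord := DFunLike.congr_fun heq i
    simp only [Finsupp.add_apply] at hcoord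
    omega

theorem pommaret_unique {α η α' η' : Mon N} (hα : α ∈ MinBasis J) (hα' : α' ∈ MinBasis J)
    (hst : StarCond α η) (hst' : StarCond α' η') (heq : α + η = α' + η') :
    α = α' ∧ η = η' := by
  have main : α = α' := by
    by_cases hα0 : α = 0
    · subst hα0
      exact hα'.2 0 hα.1 zero_le
    by_cases hα'0 : α' = 0
    · subst hα'0
      exact (hα.2 0 hα'.1 zero_le).symm
    rcases lt_trichotomy (minidx α hα0) (minidx α' hα'0) with h | h | h
    · exact ((hα.2 α' hα'.1 (pom_le_aux1 hst hst' heq hα0 hα'0 h))).symm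
    · rcases le_total (α (minidx α hα0)) (α' (minidx α hα0)) with h2 | h2
      · exact hα'.2 α hα.1 (pom_le_aux2 hst hst' heq hα0 hα'0 h h2)
      · refine (hα.2 α' hα'.1 (pom_le_aux2 hst' hst heq.symm hα'0 hα0 h.symm ?_)).symm
        rw [← h]
        exact h2
    · exact hα'.2 α hα.1 (pom_le_aux1 hst' hst heq.symm hα'0 hα0 h)
  refine ⟨main, ?_⟩
  rw [main] at heq
  exact add_left_cancel heq

open Classical in
/-- The Pommaret decomposition, as a function (via choice). -/
noncomputable def pom (J : Set (Mon N)) (γ : Mon N) : Mon N × Mon N :=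
  if h : ∃ p : Mon N × Mon N, p.1 ∈ MinBasis J ∧ γ = p.1 + p.2 ∧ StarCond p.1 p.2 then
    h.choose
  else (γ, 0)

lemma pom_spec (hss : StronglyStable J) {γ : Mon N} (hγ : γ ∈ J) :
    (pom J γ).1 ∈ MinBasis J ∧ γ = (pom J γ).1 + (pom J γ).2 ∧
      StarCond (pom J γ).1 (pom J γ).2 := by
  have hex : ∃ p : Mon N × Mon N, p.1 ∈ MinBasis J ∧ γ = p.1 + p.2 ∧ StarCond p.1 p.2 := by
    obtain ⟨α, η, h1, h2, h3⟩ := pommaret_exists hss hγ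
    exact ⟨(α, η), h1, h2, h3⟩
  rw [pom, dif_pos hex]
  exact hex.choose_spec

lemma pom_eq (hss : StronglyStable J) {γ α η : Mon N} (hγ : γ ∈ J) (hα : α ∈ MinBasis J)
    (heq : γ = α + η) (hst : StarCond α η) : pom J γ = (α, η) := by
  obtain ⟨h1, h2, h3⟩ := pom_spec hss hγ
  obtain ⟨e1, e2⟩ := pommaret_unique h1 hα h3 hst (by rw [← h2, ← heq])
  exact Prod.ext e1 e2

/-- KEY LEMMA : if `u ∉ J` but `η + u ∈ J`, then the Pommaret cofactor of `η + u`
is strictly smaller than `η` in the top-lexicographic order. -/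
theorem key_lemma (hss : StronglyStable J) {u η α' η' : Mon N} (hu : u ∉ J)
    (hα' : α' ∈ J) (hst' : StarCond α' η') (hdec : η + u = α' + η') : nu η' < nu η := by
  rcases lt_trichotomy (nu η') (nu η) with h | h | h
  · exact h
  · exfalso
    have : η' = η := nu_inj h
    subst this
    have : u = α' := by
      have : u + η' = α' + η' := by rw [add_comm u η', hdec]
      exact add_right_cancel this
    exact hu (this ▸ hα')
  · exfalso
    rw [nu_lt_iff] at h
    obtain ⟨i0, hi0, hlt⟩ := h
    have hsupp : ∀ k, k < i0 → α' k = 0 := by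
      intro k hk
      by_contra hc
      exact absurd (hst' k i0 hc (by omega)) (not_le.mpr hk)
    have hle : α' ≤ u := by
      apply mon_le_iff.mpr
      intro k
      have hcoord := DFunLike.congr_fun hdec k
      simp only [Finsupp.add_apply] at hcoord
      rcases lt_trichotomy k i0 with hki | hki | hki
      · have := hsupp k hki
        omega
      · subst hki; omega
      · have := hi0 k hki
        omega
    obtain ⟨c, hc⟩ := mon_exists_add_of_le hle
    exact hu (hc ▸ hss.1 α' hα' c)

/-- The cofactor of `α + x_i` for `α` minimal and `x_i` a non-multiplicative variable. -/
lemma cof_single_lt (hss : StronglyStable J) {α : Mon N} (hα : α ∈ MinBasis J)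
    {i j : Fin N} (hj : j < i) (hαj : α j ≠ 0) :
    nu (pom J (α + Finsupp.single i 1)).2 < nu (Finsupp.single i 1) := by
  have hγ : α + Finsupp.single i 1 ∈ J := hss.1 α hα.1 _
  obtain ⟨hα₀, hdec, hst₀⟩ := pom_spec hss hγ
  set α₀ := (pom J (α + Finsupp.single i 1)).1
  set η₀ := (pom J (α + Finsupp.single i 1)).2
  rcases lt_trichotomy (nu η₀) (nu (Finsupp.single i 1)) with h | h | h
  · exact h
  · exfalso
    have he : η₀ = Finsupp.single i 1 := nu_inj h
    rw [he] at hdec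
    have heq2 : α = α₀ := add_right_cancel hdec
    rw [heq2] at hαj
    exact absurd (hst₀ j i hαj (by simp [he])) (not_le.mpr hj)
  · exfalso
    rw [nu_lt_iff] at h
    obtain ⟨i1, hi1, hlt⟩ := h
    have hα₀small : ∀ k, k < i1 → α₀ k = 0 := by
      intro k hk
      by_contra hc
      exact absurd (hst₀ k i1 hc (by omega)) (not_le.mpr hk)
    have hlei : α₀ ≤ α := by
      apply mon_le_iff.mpr
      intro k
      have hcoord := DFunLike.congr_fun hdec k
      simp only [Finsupp.add_apply] at hcoord
      rcases lt_trichotomy k i1 with hki | hki | hki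
      · have := hα₀small k hki; omega
      · subst hki; omega
      · have := hi1 k hki; omega
    have heq2 : α₀ = α := hα.2 α₀ hα₀.1 hlei
    have hcoord := DFunLike.congr_fun hdec i1
    rw [heq2] at hcoord
    simp only [Finsupp.add_apply] at hcoord
    omega

end PartB
/-! ### Part C: polynomial support lemmas -/

section PartC

variable {N : ℕ} (K : Type) [Field K]

lemma mono_support (u : Mon N) : (mono K u).support = {u} := by
  classical
  rw [mono, MvPolynomial.support_monomial]
  simp

lemma coeff_mono (u v : Mon N) :
    MvPolynomial.coeff v (mono K u) = if u = v then 1 else 0 := by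
  classical
  rw [mono, MvPolynomial.coeff_monomial]

variable {K}

lemma supp_mono_mul {η : Mon N} {p : MvPolynomial (Fin N) K} {u : Mon N}
    (hu : u ∈ (mono K η * p).support) : ∃ v ∈ p.support, u = η + v := by
  rw [MvPolynomial.mem_support_iff, mono, MvPolynomial.coeff_monomial_mul'] at hu
  split_ifs at hu with h
  · refine ⟨u - η, ?_, ?_⟩
    · rw [MvPolynomial.mem_support_iff]
      intro hc
      rw [hc, mul_zero] at hu
      exact hu rfl
    · ext i
      have := mon_le_iff.mp h i
      simp [Finsupp.add_apply, Finsupp.tsub_apply]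
      omega
  · exact absurd rfl hu

lemma coeff_mono_mul (η v : Mon N) (p : MvPolynomial (Fin N) K) :
    MvPolynomial.coeff (η + v) (mono K η * p) = MvPolynomial.coeff v p := by
  rw [mono, MvPolynomial.coeff_monomial_mul, one_mul]

/-- Polynomials with support inside a given set of monomials, as a submodule. -/
noncomputable def suppIn (K : Type) [Field K] {N : ℕ} (S : Set (Mon N)) :
    Submodule K (MvPolynomial (Fin N) K) where
  carrier := {g | ∀ u ∈ g.support, u ∈ S}
  zero_mem' := by simp
  add_mem' := by
    intro a b ha hb u hu
    rcases Finset.mem_union.mp (MvPolynomial.support_add hu) with h | h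
    · exact ha u h
    · exact hb u h
  smul_mem' := by
    intro c a ha u hu
    exact ha u (MvPolynomial.support_smul hu)

lemma mem_suppIn {S : Set (Mon N)} {g : MvPolynomial (Fin N) K} :
    g ∈ suppIn K S ↔ ∀ u ∈ g.support, u ∈ S := Iff.rfl

lemma smul_mono (c : K) (v : Mon N) : c • mono K v = MvPolynomial.monomial v c := by
  rw [mono, MvPolynomial.smul_monomial, smul_eq_mul, mul_one]

lemma suppIn_le_span {S : Set (Mon N)} :
    suppIn K S ≤ Submodule.span K (mono K '' S) := by
  intro p hp
  rw [MvPolynomial.as_sum p]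
  refine Submodule.sum_mem _ fun v hv => ?_
  rw [← smul_mono]
  exact Submodule.smul_mem _ _ (Submodule.subset_span ⟨v, hp v hv, rfl⟩)

lemma span_le_suppIn {S : Set (Mon N)} :
    Submodule.span K (mono K '' S) ≤ suppIn K S := by
  rw [Submodule.span_le]
  rintro q ⟨u, hu, rfl⟩
  intro v hv
  rw [mono_support] at hv
  rwa [Finset.mem_singleton.mp hv]

lemma spanNLE_eq (J : Set (Mon N)) (t : ℕ) :
    spanNLE K J t = suppIn K {u : Mon N | u ∉ J ∧ mdeg u ≤ t} :=
  le_antisymm (span_le_suppIn) (suppIn_le_span)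

lemma mdeg_le_totalDegree {p : MvPolynomial (Fin N) K} {u : Mon N} (h : u ∈ p.support) :
    mdeg u ≤ p.totalDegree := MvPolynomial.le_totalDegree h

end PartC

/-! ### Part D: reduction basics -/

section PartD

variable {N : ℕ} {K : Type} [Field K] {J : Set (Mon N)} {f : Mon N → MvPolynomial (Fin N) K}

lemma rstep_sub_mem {g g₁ : MvPolynomial (Fin N) K} (h : RStep K J f g g₁) :
    g - g₁ ∈ idealG K J f := by
  obtain ⟨γ, α, η, _, _, hα, _, _, hg₁⟩ := h
  rw [hg₁]
  simp only [sub_sub_cancel]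
  rw [MvPolynomial.smul_eq_C_mul]
  exact Ideal.mul_mem_left _ _ (Ideal.mul_mem_left _ _
    (Ideal.subset_span (Set.mem_image_of_mem f hα)))

lemma reduces_sub_mem {g h : MvPolynomial (Fin N) K} (hr : Reduces K J f g h) :
    g - h ∈ idealG K J f := by
  induction hr using Relation.ReflTransGen.head_induction_on with
  | refl => simp
  | head hstep _ ih =>
    rename_i a b _
    have h1 : a - b ∈ idealG K J f := rstep_sub_mem hstep
    have : a - h = (a - b) + (b - h) := by ring
    rw [this]
    exact add_mem h1 ih

end PartD
/-! ### Part D2: one-step analysis and termination of reduction -/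

section PartD2

variable {N : ℕ} {K : Type} [Field K] {J : Set (Mon N)} {f : Mon N → MvPolynomial (Fin N) K}
  {m : ℕ}

lemma rstep_analysis (hss : StronglyStable J) (hms : JmMarkedSet K J m f)
    {g : MvPolynomial (Fin N) K} {γ : Mon N} (hγs : γ ∈ g.support) (hγJ : γ ∈ J) :
    RStep K J f g (g - MvPolynomial.coeff γ g • (mono K (pom J γ).2 * f (pom J γ).1)) ∧
    γ ∉ (g - MvPolynomial.coeff γ g • (mono K (pom J γ).2 * f (pom J γ).1)).support ∧
    ∀ u ∈ (g - MvPolynomial.coeff γ g • (mono K (pom J γ).2 * f (pom J γ).1)).support,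
      u ∉ g.support → u ∈ J → nu (pom J u).2 < nu (pom J γ).2 := by
  classical
  obtain ⟨hα, hdec, hstar⟩ := pom_spec hss hγJ
  set α := (pom J γ).1 with hα'
  set η := (pom J γ).2 with hη'
  set g₁ := g - MvPolynomial.coeff γ g • (mono K η * f α) with hg₁
  have hcoeffα : MvPolynomial.coeff α (f α) = 1 := (hms α hα).1
  refine ⟨⟨γ, α, η, hγs, hγJ, hα, hdec, hstar, rfl⟩, ?_, ?_⟩
  · rw [MvPolynomial.mem_support_iff]
    push_neg
    rw [hg₁, MvPolynomial.coeff_sub, MvPolynomial.coeff_smul]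
    have : MvPolynomial.coeff γ (mono K η * f α) = 1 := by
      rw [hdec, add_comm α η, coeff_mono_mul, hcoeffα]
    rw [this]
    simp
  · intro u hu hunotg huJ
    have hsub : u ∈ (MvPolynomial.coeff γ g • (mono K η * f α)).support := by
      have := MvPolynomial.support_sub (σ := Fin N) g (MvPolynomial.coeff γ g • (mono K η * f α)) hu
      rcases Finset.mem_union.mp this with h | h
      · exact absurd h hunotg
      · exact h
    have hsub2 : u ∈ (mono K η * f α).support := MvPolynomial.support_smul hsub
    obtain ⟨v, hv, huv⟩ := supp_mono_mul hsub2
    have hvne : v ≠ α := by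
      rintro rfl
      rw [huv, add_comm] at hunotg
      rw [← hdec] at hunotg
      exact hunotg hγs
    have hvJ : v ∉ J := ((hms α hα).2 v hv hvne).1
    obtain ⟨hα₁, hdec₁, hstar₁⟩ := pom_spec hss huJ
    refine key_lemma hss hvJ hα₁.1 hstar₁ ?_
    rw [← huv, ← hdec₁]

lemma rstep_canonical (hss : StronglyStable J) {g g₁ : MvPolynomial (Fin N) K}
    (h : RStep K J f g g₁) :
    ∃ γ ∈ g.support, γ ∈ J ∧
      g₁ = g - MvPolynomial.coeff γ g • (mono K (pom J γ).2 * f (pom J γ).1) := by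
  obtain ⟨γ, α, η, hγs, hγJ, hα, hdec, hstar, hg₁⟩ := h
  have hpom : pom J γ = (α, η) := pom_eq hss hγJ hα hdec hstar
  exact ⟨γ, hγs, hγJ, by rw [hpom, hg₁]⟩

lemma exists_reduced (hss : StronglyStable J) (hms : JmMarkedSet K J m f)
    (g : MvPolynomial (Fin N) K) :
    ∃ g', Reduces K J f g g' ∧ ∀ u ∈ g'.support, u ∉ J := by
  classical
  haveI h1 : WellFoundedGT (Fin N)ᵒᵈ := Finite.to_wellFoundedGT
  haveI h2 : WellFoundedLT (Lex ((Fin N)ᵒᵈ →₀ ℕ)) := Finsupp.Lex.wellFoundedLT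
  set L := Lex ((Fin N)ᵒᵈ →₀ ℕ) with hL
  set Jset : MvPolynomial (Fin N) K → Finset (Mon N) :=
    fun g => g.support.filter (· ∈ J) with hJset
  set ω : Mon N → L := fun γ => nu (pom J γ).2 with hω
  set μ : MvPolynomial (Fin N) K → (WithBot L) ×ₗ ℕ := fun g =>
    toLex (((Jset g).image ω).max,
      ((Jset g).filter (fun γ => (↑(ω γ) : WithBot L) = ((Jset g).image ω).max)).card) with hμ
  have wf : WellFounded (fun a b : MvPolynomial (Fin N) K => μ a < μ b) :=
    InvImage.wf μ (IsWellFounded.wf)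
  induction g using wf.induction with
  | _ g IH =>
  by_cases hempty : Jset g = ∅
  · refine ⟨g, Relation.ReflTransGen.refl, fun u hu huJ => ?_⟩
    have : u ∈ Jset g := Finset.mem_filter.mpr ⟨hu, huJ⟩
    rw [hempty] at this
    simp at this
  · have hne : (Jset g).Nonempty := Finset.nonempty_iff_ne_empty.mpr hempty
    have hneS : ((Jset g).image ω).Nonempty := hne.image ω
    set M := ((Jset g).image ω).max' hneS with hM
    have hMmax : ((Jset g).image ω).max = ↑M := (Finset.coe_max' hneS).symm
    obtain ⟨γ₀, hγ₀mem, hγ₀M⟩ : ∃ γ₀ ∈ Jset g, ω γ₀ = M := by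
      obtain ⟨l, hl, hlM⟩ := Finset.mem_image.mp (Finset.max'_mem _ hneS)
      exact ⟨l, hl, hlM⟩
    have hγ₀s : γ₀ ∈ g.support := (Finset.mem_filter.mp hγ₀mem).1
    have hγ₀J : γ₀ ∈ J := (Finset.mem_filter.mp hγ₀mem).2
    obtain ⟨hstep, hγ₀out, hnew⟩ := rstep_analysis hss hms hγ₀s hγ₀J
    set g₁ := g - MvPolynomial.coeff γ₀ g • (mono K (pom J γ₀).2 * f (pom J γ₀).1) with hg₁
    have hJsub : ∀ u ∈ Jset g₁, (u ∈ Jset g ∧ u ≠ γ₀) ∨ ω u < M := by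
      intro u hu
      have hus : u ∈ g₁.support := (Finset.mem_filter.mp hu).1
      have huJ : u ∈ J := (Finset.mem_filter.mp hu).2
      by_cases hug : u ∈ g.support
      · left
        exact ⟨Finset.mem_filter.mpr ⟨hug, huJ⟩, fun h => hγ₀out (h ▸ hus)⟩
      · right
        rw [← hγ₀M]
        exact hnew u hus hug huJ
    have hle : ∀ u ∈ Jset g₁, ω u ≤ M := by
      intro u hu
      rcases hJsub u hu with ⟨h, _⟩ | h
      · exact Finset.le_max' _ _ (Finset.mem_image_of_mem ω h)
      · exact le_of_lt h
    have hμlt : μ g₁ < μ g := by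
      rw [hμ]
      have hmax1 : ((Jset g₁).image ω).max ≤ ↑M := by
        apply Finset.max_le
        intro l hl
        obtain ⟨u, hu, rfl⟩ := Finset.mem_image.mp hl
        exact_mod_cast hle u hu
      rw [Prod.Lex.lt_iff]
      rcases lt_or_eq_of_le hmax1 with hlt | heq
      · left
        simp only [ofLex_toLex]; rw [hMmax]
        exact hlt
      · right
        constructor
        · simp only [ofLex_toLex]; rw [hMmax, heq]
        · simp only [ofLex_toLex]; rw [hMmax]
          apply Finset.card_lt_card
          rw [Finset.ssubset_iff_of_subset]
          · refine ⟨γ₀, ?_, ?_⟩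
            · apply Finset.mem_filter.mpr
              refine ⟨hγ₀mem, by rw [hγ₀M]⟩
            · intro hc
              have h3 := (Finset.mem_filter.mp hc).1
              exact hγ₀out (Finset.mem_filter.mp h3).1
          · intro u hu
            have hu1 := Finset.mem_filter.mp hu
            have : ω u = M := by
              have := hu1.2
              rw [heq] at this
              exact_mod_cast this
            rcases hJsub u hu1.1 with ⟨h, _⟩ | h
            · apply Finset.mem_filter.mpr
              exact ⟨h, by rw [this]⟩
            · rw [this] at h
              exact absurd h (lt_irrefl M)
    obtain ⟨g', hred, hredd⟩ := IH g₁ hμlt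
    exact ⟨g', Relation.ReflTransGen.head hstep hred, hredd⟩

end PartD2
/-! ### Part E: the star-span `V` and disjointness -/

section PartE

variable {N : ℕ} {K : Type} [Field K] {J : Set (Mon N)} {f : Mon N → MvPolynomial (Fin N) K}
  {m : ℕ}

variable (K J f) in
/-- The set of star products `x^η f_α`. -/
def starSet : Set (MvPolynomial (Fin N) K) :=
  {q | ∃ α η : Mon N, α ∈ MinBasis J ∧ StarCond α η ∧ q = mono K η * f α}

variable (K J f) in
/-- Star products with cofactor bounded by `b`. -/
def starSetB (b : Mon N) : Set (MvPolynomial (Fin N) K) :=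
  {q | ∃ α η : Mon N, α ∈ MinBasis J ∧ StarCond α η ∧ nu η < nu b ∧ q = mono K η * f α}

variable (K J f) in
/-- The `K`-span of all star products. -/
noncomputable def Vfull : Submodule K (MvPolynomial (Fin N) K) :=
  Submodule.span K (starSet K J f)

lemma mono_mul_mono (a b : Mon N) : mono K a * mono K b = mono K (a + b) := by
  rw [mono, mono, mono, MvPolynomial.monomial_mul, one_mul]

lemma mono_single_eq_X (i : Fin N) : mono K (Finsupp.single i 1) = MvPolynomial.X i := by
  rw [mono, ← MvPolynomial.X_pow_eq_monomial, pow_one]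

lemma inv_reduces_span (hss : StronglyStable J) (hms : JmMarkedSet K J m f) {b : Mon N}
    {g h : MvPolynomial (Fin N) K} (hred : Reduces K J f g h)
    (hinv : ∀ γ ∈ g.support, γ ∈ J → nu (pom J γ).2 < nu b) :
    g - h ∈ Submodule.span K (starSetB K J f b) := by
  induction hred using Relation.ReflTransGen.head_induction_on with
  | refl => simp
  | @head a a₁ hstep hrest ih =>
    obtain ⟨γ, hγs, hγJ, ha₁⟩ := rstep_canonical hss hstep
    obtain ⟨_, hγout, hnewlt⟩ := rstep_analysis hss hms hγs hγJ
    obtain ⟨hpα, hpdec, hpstar⟩ := pom_spec hss hγJ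
    have hbnd : nu (pom J γ).2 < nu b := hinv γ hγs hγJ
    have hinv₁ : ∀ γ' ∈ a₁.support, γ' ∈ J → nu (pom J γ').2 < nu b := by
      intro γ' hγ's hγ'J
      by_cases hin : γ' ∈ a.support
      · exact hinv γ' hin hγ'J
      · rw [ha₁] at hγ's
        exact lt_trans (hnewlt γ' hγ's hin hγ'J) hbnd
    have hpiece : a - a₁ ∈ Submodule.span K (starSetB K J f b) := by
      rw [ha₁]
      simp only [sub_sub_cancel]
      exact Submodule.smul_mem _ _
        (Submodule.subset_span ⟨(pom J γ).1, (pom J γ).2, hpα, hpstar, hbnd, rfl⟩)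
    have : a - h = (a - a₁) + (a₁ - h) := by ring
    rw [this]
    exact add_mem hpiece (ih hinv₁)

lemma inv_Xi (hss : StronglyStable J) (hms : JmMarkedSet K J m f) {α : Mon N}
    (hα : α ∈ MinBasis J) {i j : Fin N} (hj : j < i) (hαj : α j ≠ 0) :
    ∀ γ ∈ (MvPolynomial.X i * f α).support, γ ∈ J →
      nu (pom J γ).2 < nu (Finsupp.single i 1) := by
  intro γ hγs hγJ
  rw [← mono_single_eq_X] at hγs
  obtain ⟨v, hv, hγv⟩ := supp_mono_mul hγs
  by_cases hvα : v = α
  · subst hvα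
    have : γ = v + Finsupp.single i 1 := by rw [hγv, add_comm]
    rw [this]
    exact cof_single_lt hss hα hj hαj
  · have hvJ : v ∉ J := ((hms α hα).2 v hv hvα).1
    obtain ⟨hα₁, hdec₁, hstar₁⟩ := pom_spec hss hγJ
    refine key_lemma hss hvJ hα₁.1 hstar₁ ?_
    rw [← hγv, ← hdec₁]

lemma mono_mul_f_mem_V (hss : StronglyStable J) (hms : JmMarkedSet K J m f)
    (hyp1 : ∀ α ∈ MinBasis J, ∀ i : Fin N, (∃ j : Fin N, j < i ∧ α j ≠ 0) →
      Reduces K J f (MvPolynomial.X i * f α) 0) :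
    ∀ δ : Mon N, ∀ α ∈ MinBasis J, mono K δ * f α ∈ Vfull K J f := by
  intro δ
  induction δ using (nu_wf (N := N)).induction with
  | _ δ IH =>
  intro α hα
  by_cases hstar : StarCond α δ
  · exact Submodule.subset_span ⟨α, δ, hα, hstar, rfl⟩
  · have hex : ∃ i0 j0 : Fin N, α i0 ≠ 0 ∧ δ j0 ≠ 0 ∧ i0 < j0 := by
      rw [StarCond] at hstar
      push_neg at hstar
      obtain ⟨i0, j0, h1, h2, h3⟩ := hstar
      exact ⟨i0, j0, h1, h2, h3⟩
    obtain ⟨i0, j0, hi0, hj0, hij⟩ := hex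
    have hδne : δ.support.Nonempty := ⟨j0, Finsupp.mem_support_iff.mpr hj0⟩
    set i := δ.support.max' hδne with hi
    have hj0i : j0 ≤ i := Finset.le_max' _ _ (Finsupp.mem_support_iff.mpr hj0)
    have hi0i : i0 < i := lt_of_lt_of_le hij hj0i
    have hδi : δ i ≠ 0 := Finsupp.mem_support_iff.mp (δ.support.max'_mem hδne)
    have hred := hyp1 α hα i ⟨i0, hi0i, hi0⟩
    have hinv := inv_Xi hss hms hα hi0i hi0
    have hmem : MvPolynomial.X i * f α ∈
        Submodule.span K (starSetB K J f (Finsupp.single i 1)) := by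
      have := inv_reduces_span hss hms hred hinv
      rwa [sub_zero] at this
    have hsplit : mono K δ * f α = mono K (δ - Finsupp.single i 1) *
        (MvPolynomial.X i * f α) := by
      rw [← mono_single_eq_X, ← mul_assoc, mono_mul_mono]
      congr 2
      ext k
      simp only [Finsupp.add_apply, Finsupp.tsub_apply, Finsupp.single_apply]
      by_cases h : i = k
      · rw [← h]; simp; omega
      · simp [h]
    rw [hsplit]
    refine Submodule.span_induction
      (p := fun x _ => mono K (δ - Finsupp.single i 1) * x ∈ Vfull K J f)
      ?_ ?_ ?_ ?_ hmem
    · rintro q ⟨α', η, hα', hstar', hlt, rfl⟩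
      rw [← mul_assoc, mono_mul_mono]
      have hlt2 : nu (δ - Finsupp.single i 1 + η) < nu δ := by
        have h2 := nu_add_lt_add_right hlt (δ - Finsupp.single i 1)
        have h3 : Finsupp.single i 1 + (δ - Finsupp.single i 1) = δ := by
          ext k
          simp only [Finsupp.add_apply, Finsupp.tsub_apply, Finsupp.single_apply]
          by_cases h : i = k
          · rw [← h]; simp; omega
          · simp [h]
        rw [h3] at h2
        rw [add_comm (δ - Finsupp.single i 1) η]
        exact h2
      exact IH _ hlt2 α' hα'
    · show mono K (δ - Finsupp.single i 1) * 0 ∈ Vfull K J f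
      rw [mul_zero]; exact zero_mem _
    · intro x y _ _ hx hy; rw [mul_add]; exact add_mem hx hy
    · intro c x _ hx; rw [mul_smul_comm]; exact Submodule.smul_mem _ _ hx

lemma X_mul_mem_V (hss : StronglyStable J) (hms : JmMarkedSet K J m f)
    (hyp1 : ∀ α ∈ MinBasis J, ∀ i : Fin N, (∃ j : Fin N, j < i ∧ α j ≠ 0) →
      Reduces K J f (MvPolynomial.X i * f α) 0)
    (i : Fin N) {p : MvPolynomial (Fin N) K} (hp : p ∈ Vfull K J f) :
    MvPolynomial.X i * p ∈ Vfull K J f := by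
  induction hp using Submodule.span_induction with
  | mem q hq =>
    obtain ⟨α, η, hα, hstar, rfl⟩ := hq
    rw [← mul_assoc, ← mono_single_eq_X, mono_mul_mono]
    exact mono_mul_f_mem_V hss hms hyp1 _ α hα
  | zero => rw [mul_zero]; exact zero_mem _
  | add x y _ _ hx hy => rw [mul_add]; exact add_mem hx hy
  | smul c x _ hx => rw [mul_smul_comm]; exact Submodule.smul_mem _ _ hx

lemma mul_mem_V (hss : StronglyStable J) (hms : JmMarkedSet K J m f)
    (hyp1 : ∀ α ∈ MinBasis J, ∀ i : Fin N, (∃ j : Fin N, j < i ∧ α j ≠ 0) →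
      Reduces K J f (MvPolynomial.X i * f α) 0)
    (r : MvPolynomial (Fin N) K) {p : MvPolynomial (Fin N) K} (hp : p ∈ Vfull K J f) :
    r * p ∈ Vfull K J f := by
  induction r using MvPolynomial.induction_on with
  | C a => rw [← MvPolynomial.smul_eq_C_mul]; exact Submodule.smul_mem _ _ hp
  | add r s hr hs => rw [add_mul]; exact add_mem hr hs
  | mul_X r i hr =>
    rw [mul_comm r (MvPolynomial.X i), mul_assoc]
    exact X_mul_mem_V hss hms hyp1 i hr

lemma idealG_le_V (hss : StronglyStable J) (hms : JmMarkedSet K J m f)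
    (hyp1 : ∀ α ∈ MinBasis J, ∀ i : Fin N, (∃ j : Fin N, j < i ∧ α j ≠ 0) →
      Reduces K J f (MvPolynomial.X i * f α) 0)
    {p : MvPolynomial (Fin N) K} (hp : p ∈ idealG K J f) : p ∈ Vfull K J f := by
  induction hp using Submodule.span_induction with
  | mem q hq =>
    obtain ⟨α, hα, rfl⟩ := hq
    have := mono_mul_f_mem_V hss hms hyp1 0 α hα
    rwa [mono, MvPolynomial.monomial_zero', MvPolynomial.C_1, one_mul] at this
  | zero => exact zero_mem _
  | add x y _ _ hx hy => exact add_mem hx hy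
  | smul c x _ hx =>
    rw [smul_eq_mul]
    exact mul_mem_V hss hms hyp1 c hx

open Classical in
/-- pick a star-pair witness for an element of `starSet`. -/
noncomputable def pickPair (J : Set (Mon N)) (f : Mon N → MvPolynomial (Fin N) K)
    (q : MvPolynomial (Fin N) K) : Mon N × Mon N :=
  if h : ∃ αη : Mon N × Mon N, αη.1 ∈ MinBasis J ∧ StarCond αη.1 αη.2 ∧
      q = mono K αη.2 * f αη.1 then h.choose else (0, 0)

lemma pickPair_spec {q : MvPolynomial (Fin N) K} (hq : q ∈ starSet K J f) :
    (pickPair J f q).1 ∈ MinBasis J ∧ StarCond (pickPair J f q).1 (pickPair J f q).2 ∧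
      q = mono K (pickPair J f q).2 * f (pickPair J f q).1 := by
  obtain ⟨α, η, h1, h2, h3⟩ := hq
  have hex : ∃ αη : Mon N × Mon N, αη.1 ∈ MinBasis J ∧ StarCond αη.1 αη.2 ∧
      q = mono K αη.2 * f αη.1 := ⟨(α, η), h1, h2, h3⟩
  rw [pickPair, dif_pos hex]
  exact hex.choose_spec

lemma V_supp_N_eq_zero (hss : StronglyStable J) (hms : JmMarkedSet K J m f)
    {p : MvPolynomial (Fin N) K} (hp : p ∈ Vfull K J f)
    (hsupp : ∀ u ∈ p.support, u ∉ J) : p = 0 := by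
  classical
  rw [Vfull, Submodule.mem_span_set] at hp
  obtain ⟨c, hcsub, hcsum⟩ := hp
  by_cases hne : c.support.Nonempty
  · exfalso
    obtain ⟨q₀, hq₀mem, hq₀max⟩ :=
      Finset.exists_max_image c.support (fun q => nu (pickPair J f q).2) hne
    obtain ⟨hα₀, hstar₀, hq₀⟩ := pickPair_spec (hcsub hq₀mem)
    set α₀ := (pickPair J f q₀).1 with hα₀'
    set η₀ := (pickPair J f q₀).2 with hη₀'
    set γ₀ := α₀ + η₀ with hγ₀'
    have hγ₀J : γ₀ ∈ J := hss.1 α₀ hα₀.1 η₀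
    have hcoeff : MvPolynomial.coeff γ₀ p = c q₀ := by
      rw [← hcsum, Finsupp.sum, MvPolynomial.coeff_sum]
      rw [Finset.sum_eq_single q₀]
      · rw [MvPolynomial.coeff_smul, hq₀, hγ₀', add_comm α₀ η₀, coeff_mono_mul,
          (hms α₀ hα₀).1, smul_eq_mul, mul_one]
      · intro q hq hqne
        rw [MvPolynomial.coeff_smul]
        obtain ⟨hαq, hstarq, hqeq⟩ := pickPair_spec (hcsub hq)
        set αq := (pickPair J f q).1
        set ηq := (pickPair J f q).2
        by_contra hc0
        have hc0' : MvPolynomial.coeff γ₀ q ≠ 0 := by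
          intro h0
          rw [h0, smul_zero] at hc0
          exact hc0 rfl
        have hγ₀supp : γ₀ ∈ q.support := MvPolynomial.mem_support_iff.mpr hc0'
        rw [hqeq] at hγ₀supp
        obtain ⟨v, hv, hγ₀v⟩ := supp_mono_mul hγ₀supp
        by_cases hvα : v = αq
        · subst hvα
          have huniq := pommaret_unique hα₀ hαq hstar₀ hstarq
            (by rw [← hγ₀', hγ₀v]; exact add_comm _ _)
          apply hqne
          rw [hqeq, hq₀, ← huniq.1, ← huniq.2]
        · have hvJ : v ∉ J := ((hms αq hαq).2 v hv hvα).1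
          have hKL := key_lemma hss hvJ hα₀.1 hstar₀
            (by rw [← hγ₀v, hγ₀', add_comm α₀ η₀])
          exact absurd (hq₀max q hq) (not_le.mpr hKL)
      · intro h
        exact absurd hq₀mem h
    have hc0 : c q₀ ≠ 0 := Finsupp.mem_support_iff.mp hq₀mem
    have : γ₀ ∈ p.support := MvPolynomial.mem_support_iff.mpr (hcoeff ▸ hc0)
    exact hsupp γ₀ this hγ₀J
  · rw [Finset.not_nonempty_iff_eq_empty] at hne
    rw [← hcsum, Finsupp.sum, hne, Finset.sum_empty]

end PartE
/-! ### Part F: the sum `⟨N(J)⟩ + (𝔊) = R` in each degree -/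

section PartF

variable {N : ℕ} {K : Type} [Field K] {J : Set (Mon N)} {f : Mon N → MvPolynomial (Fin N) K}
  {m : ℕ}

lemma mon_le_add_right (a b : Mon N) : a ≤ a + b :=
  mon_le_iff.mpr fun i => by simp [Finsupp.add_apply]

lemma exists_between {γ : Mon N} {m : ℕ} (h3 : m ≤ mdeg γ) :
    ∀ k : ℕ, ∀ α : Mon N, α ≤ γ → mdeg α ≤ m → m - mdeg α = k →
      ∃ β : Mon N, α ≤ β ∧ β ≤ γ ∧ mdeg β = m := by
  intro k
  induction k with
  | zero =>
    intro α h1 h2 hk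
    exact ⟨α, le_rfl, h1, by omega⟩
  | succ k ih =>
    intro α h1 h2 hk
    have hlt : mdeg α < mdeg γ := by omega
    have hne : α ≠ γ := fun h => by rw [h] at hlt; omega
    have hex : ∃ i, α i < γ i := by
      by_contra hcon
      push_neg at hcon
      exact hne (le_antisymm h1 (mon_le_iff.mpr hcon))
    obtain ⟨i, hi⟩ := hex
    have h1' : α + Finsupp.single i 1 ≤ γ := by
      apply mon_le_iff.mpr
      intro k'
      have := mon_le_iff.mp h1 k'
      by_cases h : i = k'
      · rw [← h]; simp [Finsupp.add_apply]; omega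
      · simp [Finsupp.add_apply, Finsupp.single_apply, h]; omega
    have hd : mdeg (α + Finsupp.single i 1) = mdeg α + 1 := by
      rw [mdeg_add, mdeg_single]
    obtain ⟨β, hβ1, hβ2, hβ3⟩ := ih (α + Finsupp.single i 1) h1' (by omega) (by omega)
    exact ⟨β, le_trans (mon_le_add_right α _) hβ1, hβ2, hβ3⟩

/-- From the marked set and hypothesis (ii), a head polynomial for each `β ∈ J`
which is either small or minimal. -/
lemma head_poly (hms : JmMarkedSet K J m f)
    (hyp2 : ∀ β : Mon N, β ∈ J → mdeg β ≤ m → β ∉ MinBasis J →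
      ∃ gβ, Reduces K J f (mono K β) gβ ∧ ∀ u ∈ gβ.support, u ∉ J ∧ mdeg u ≤ m)
    {β : Mon N} (hβJ : β ∈ J) (hsm : mdeg β ≤ m ∨ β ∈ MinBasis J) :
    ∃ q ∈ idealG K J f, MvPolynomial.coeff β q = 1 ∧
      ∀ u ∈ q.support, u ≠ β → u ∉ J ∧ mdeg u ≤ max m (mdeg β) := by
  classical
  by_cases hB : β ∈ MinBasis J
  · refine ⟨f β, Ideal.subset_span (Set.mem_image_of_mem f hB), (hms β hB).1, ?_⟩
    intro u hu hune
    exact (hms β hB).2 u hu hune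
  · have hsm' : mdeg β ≤ m := by tauto
    obtain ⟨gβ, hred, hgβ⟩ := hyp2 β hβJ hsm' hB
    refine ⟨mono K β - gβ, reduces_sub_mem hred, ?_, ?_⟩
    · rw [MvPolynomial.coeff_sub, coeff_mono, if_pos rfl]
      have : MvPolynomial.coeff β gβ = 0 := by
        by_contra hc
        exact (hgβ β (MvPolynomial.mem_support_iff.mpr hc)).1 hβJ
      rw [this, sub_zero]
    · intro u hu hune
      have := MvPolynomial.support_sub (σ := Fin N) (mono K β) gβ hu
      rcases Finset.mem_union.mp this with h | h
      · rw [mono_support] at h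
        exact absurd (Finset.mem_singleton.mp h) hune
      · obtain ⟨h1, h2⟩ := hgβ u h
        exact ⟨h1, le_trans h2 (le_max_left _ _)⟩

lemma gle_mem {t : ℕ} {q : MvPolynomial (Fin N) K} (hqI : q ∈ idealG K J f)
    (hdeg : ∀ u ∈ q.support, mdeg u ≤ t) : q ∈ GleSub K J f t :=
  Submodule.mem_inf.mpr ⟨hqI, hdeg⟩

lemma witness_mem_sup {t : ℕ} {γ : Mon N} (hdeg : mdeg γ ≤ t)
    {q : MvPolynomial (Fin N) K} (hqI : q ∈ idealG K J f)
    (hqc : MvPolynomial.coeff γ q = 1)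
    (htail : ∀ u ∈ q.support, u ≠ γ → mdeg u ≤ t ∧
      (u ∈ J → mono K u ∈ spanNLE K J t ⊔ GleSub K J f t) ∧
      (u ∉ J → True)) :
    mono K γ ∈ spanNLE K J t ⊔ GleSub K J f t := by
  classical
  have hγs : γ ∈ q.support := MvPolynomial.mem_support_iff.mpr (by rw [hqc]; exact one_ne_zero)
  have hqsum : q = MvPolynomial.monomial γ 1 +
      ∑ u ∈ q.support.erase γ, MvPolynomial.monomial u (MvPolynomial.coeff u q) := by
    conv_lhs => rw [MvPolynomial.as_sum q]
    rw [← Finset.add_sum_erase _ _ hγs, hqc]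
  have heq : mono K γ = q -
      ∑ u ∈ q.support.erase γ, MvPolynomial.monomial u (MvPolynomial.coeff u q) := by
    rw [eq_sub_iff_add_eq, mono]
    exact hqsum.symm
  have hqdeg : ∀ u ∈ q.support, mdeg u ≤ t := by
    intro u hu
    by_cases h : u = γ
    · rw [h]; exact hdeg
    · exact (htail u hu h).1
  rw [heq]
  refine sub_mem (Submodule.mem_sup_right (gle_mem hqI hqdeg)) (Submodule.sum_mem _ ?_)
  intro u hu
  have hune : u ≠ γ := Finset.ne_of_mem_erase hu
  have hus : u ∈ q.support := Finset.mem_of_mem_erase hu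
  rw [← smul_mono]
  by_cases huJ : u ∈ J
  · exact Submodule.smul_mem _ _ (((htail u hus hune).2.1) huJ)
  · refine Submodule.smul_mem _ _ (Submodule.mem_sup_left ?_)
    exact Submodule.subset_span ⟨u, ⟨huJ, (htail u hus hune).1⟩, rfl⟩

lemma mono_mem_sup (hss : StronglyStable J) (hms : JmMarkedSet K J m f)
    (hyp2 : ∀ β : Mon N, β ∈ J → mdeg β ≤ m → β ∉ MinBasis J →
      ∃ gβ, Reduces K J f (mono K β) gβ ∧ ∀ u ∈ gβ.support, u ∉ J ∧ mdeg u ≤ m)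
    {t : ℕ} (ht : m ≤ t) :
    ∀ γ : Mon N, γ ∈ J → mdeg γ ≤ t → mono K γ ∈ spanNLE K J t ⊔ GleSub K J f t := by
  have wf2 : WellFounded (fun a b : Mon N => nu (pom J a).2 < nu (pom J b).2) :=
    InvImage.wf (fun γ => (pom J γ).2) nu_wf
  intro γ
  induction γ using wf2.induction with
  | _ γ IH =>
  intro hγJ hdeg
  by_cases hc : mdeg γ ≤ m
  · obtain ⟨q, hqI, hqc, hqt⟩ := head_poly hms hyp2 hγJ (Or.inl hc)
    refine witness_mem_sup hdeg hqI hqc ?_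
    intro u hu hune
    obtain ⟨h1, h2⟩ := hqt u hu hune
    exact ⟨by omega, fun h => absurd h h1, fun _ => trivial⟩
  · push_neg at hc
    obtain ⟨hpα, hpdec, hpstar⟩ := pom_spec hss hγJ
    set α := (pom J γ).1 with hα'
    set η := (pom J γ).2 with hη'
    have hαγ : α ≤ γ := by rw [hpdec]; exact mon_le_add_right α η
    -- choose β
    obtain ⟨β, hβJ, hαβ, hβγ, hmβ, hmaxβ, hhead⟩ :
        ∃ β : Mon N, β ∈ J ∧ α ≤ β ∧ β ≤ γ ∧ m ≤ mdeg β ∧ max m (mdeg β) = mdeg β ∧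
          (mdeg β ≤ m ∨ β ∈ MinBasis J) := by
      by_cases hαm : m ≤ mdeg α
      · exact ⟨α, hpα.1, le_rfl, hαγ, hαm, by omega, Or.inr hpα⟩
      · obtain ⟨β, h1, h2, h3⟩ := exists_between (le_of_lt hc) (m - mdeg α) α hαγ
          (by omega) rfl
        obtain ⟨d, hd⟩ := mon_exists_add_of_le h1
        exact ⟨β, by rw [hd]; exact hss.1 α hpα.1 d, h1, h2, by omega, by omega,
          Or.inl (by omega)⟩
    obtain ⟨qβ, hqβI, hqβc, hqβt⟩ := head_poly hms hyp2 hβJ hhead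
    obtain ⟨η', hη'⟩ := mon_exists_add_of_le hβγ
    set q := mono K η' * qβ with hq
    have hqI : q ∈ idealG K J f := Ideal.mul_mem_left _ _ hqβI
    have hγeq : γ = η' + β := by rw [hη', add_comm]
    have hqc : MvPolynomial.coeff γ q = 1 := by
      rw [hγeq, hq, coeff_mono_mul, hqβc]
    have hη'η : η' ≤ η := by
      apply mon_le_iff.mpr
      intro k
      have e1 := DFunLike.congr_fun hpdec k
      have e2 := DFunLike.congr_fun hη' k
      have e3 := mon_le_iff.mp hαβ k
      simp only [Finsupp.add_apply] at e1 e2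
      omega
    refine witness_mem_sup hdeg hqI hqc ?_
    intro u hu hune
    obtain ⟨v, hv, huv⟩ := supp_mono_mul (hq ▸ hu)
    have hvβ : v ≠ β := by
      rintro rfl
      exact hune (by rw [huv, ← hγeq])
    obtain ⟨hvJ, hvdeg⟩ := hqβt v hv hvβ
    have hudeg : mdeg u ≤ t := by
      have : mdeg u = mdeg η' + mdeg v := by rw [huv, mdeg_add]
      have h4 : mdeg γ = mdeg η' + mdeg β := by rw [hγeq, mdeg_add]
      omega
    refine ⟨hudeg, ?_, fun _ => trivial⟩
    intro huJ
    obtain ⟨hα₁, hdec₁, hstar₁⟩ := pom_spec hss huJ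
    have hKL : nu (pom J u).2 < nu η' :=
      key_lemma hss hvJ hα₁.1 hstar₁ (by rw [← huv]; exact hdec₁)
    have hlt : nu (pom J u).2 < nu (pom J γ).2 :=
      lt_of_lt_of_le hKL (le_trans (nu_le_of_le hη'η) (le_of_eq rfl))
    exact IH u hlt huJ hudeg

end PartF
lemma mem_degLE {N : ℕ} {K : Type} [Field K] {t : ℕ} {p : MvPolynomial (Fin N) K} :
    p ∈ degLE K N t ↔ ∀ u ∈ p.support, mdeg u ≤ t := Iff.rfl

/-- effective criterion. A `[𝔧,m]`-marked set `𝔊` is a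
`[𝔧,m]`-marked basis iff (i) `x_i f_α` reduces to `0` for every `f_α ∈ 𝔊` and
every variable `x_i > min(x^α)`, and (ii) every `x^β ∈ 𝔧_{≤m} \ B_𝔧` reduces
to a polynomial supported in `N(𝔧)_{≤m}`. -/
theorem markedBasis_criterion {n : ℕ} (K : Type) [Field K]
    (𝔧 : Set (Mon n)) (m : ℕ) (f : Mon n → MvPolynomial (Fin n) K)
    (hss : StronglyStable 𝔧) (hm : 0 < m) (hms : JmMarkedSet K 𝔧 m f) :
    JmMarkedBasis K 𝔧 m f ↔
    ((∀ α ∈ MinBasis 𝔧, ∀ i : Fin n, (∃ j : Fin n, j < i ∧ α j ≠ 0) →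
        Reduces K 𝔧 f (MvPolynomial.X i * f α) 0) ∧
      (∀ β : Mon n, β ∈ 𝔧 → mdeg β ≤ m → β ∉ MinBasis 𝔧 →
        ∃ gβ, Reduces K 𝔧 f (mono K β) gβ ∧
          ∀ u ∈ gβ.support, u ∉ 𝔧 ∧ mdeg u ≤ m)) := by
  constructor
  · rintro ⟨hms', hbasis⟩
    constructor
    · -- (i)
      intro α hα i hi
      obtain ⟨j, hj, hαj⟩ := hi
      obtain ⟨g', hred, hg'⟩ := exists_reduced hss hms (MvPolynomial.X i * f α)
      have hXmem : MvPolynomial.X i * f α ∈ idealG K 𝔧 f :=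
        Ideal.mul_mem_left _ _ (Ideal.subset_span (Set.mem_image_of_mem f hα))
      have hdiff := reduces_sub_mem hred
      have hg'I : g' ∈ idealG K 𝔧 f := by
        have heq : g' = (MvPolynomial.X i * f α) - ((MvPolynomial.X i * f α) - g') := by ring
        rw [heq]
        exact sub_mem hXmem hdiff
      set t := max m g'.totalDegree with ht'
      obtain ⟨hdisj, _⟩ := hbasis t (le_max_left _ _)
      have h1 : g' ∈ spanNLE K 𝔧 t := by
        rw [spanNLE_eq]
        intro u hu
        exact ⟨hg' u hu, le_trans (mdeg_le_totalDegree hu) (le_max_right _ _)⟩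
      have h2 : g' ∈ GleSub K 𝔧 f t :=
        gle_mem hg'I fun u hu => le_trans (mdeg_le_totalDegree hu) (le_max_right _ _)
      have hz : g' = 0 := (Submodule.disjoint_def.mp hdisj) g' h1 h2
      rwa [hz] at hred
    · -- (ii)
      intro β hβJ hβm hβB
      obtain ⟨g', hred, hg'⟩ := exists_reduced hss hms (mono K β)
      refine ⟨g', hred, ?_⟩
      obtain ⟨_, hsum⟩ := hbasis m le_rfl
      have hmem : mono K β ∈ degLE K n m := by
        rw [mem_degLE]
        intro u hu
        rw [mono_support] at hu
        rw [Finset.mem_singleton.mp hu]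
        exact hβm
      rw [← hsum] at hmem
      obtain ⟨p, hp, qq, hq, hpq⟩ := Submodule.mem_sup.mp hmem
      have hdiff := reduces_sub_mem hred
      have hqI : qq ∈ idealG K 𝔧 f := (Submodule.mem_inf.mp hq).1
      have hkey : g' - p ∈ idealG K 𝔧 f := by
        have heq : g' - p = qq - (mono K β - g') := by
          have : p + qq = mono K β := hpq
          rw [← this]; ring
        rw [heq]
        exact sub_mem hqI hdiff
      have hpsupp : ∀ u ∈ p.support, u ∉ 𝔧 ∧ mdeg u ≤ m := by
        rw [spanNLE_eq] at hp
        exact hp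
      set t' := max m (max g'.totalDegree p.totalDegree) with ht'
      obtain ⟨hdisj', _⟩ := hbasis t' (le_max_left _ _)
      have hdegb : ∀ u ∈ (g' - p).support, mdeg u ≤ t' := by
        intro u hu
        rcases Finset.mem_union.mp (MvPolynomial.support_sub (σ := Fin n) g' p hu) with h | h
        · exact le_trans (mdeg_le_totalDegree h) (le_trans (le_max_left _ _) (le_max_right _ _))
        · exact le_trans (mdeg_le_totalDegree h) (le_trans (le_max_right _ _) (le_max_right _ _))
      have hgp1 : g' - p ∈ spanNLE K 𝔧 t' := by
        rw [spanNLE_eq]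
        intro u hu
        refine ⟨?_, hdegb u hu⟩
        rcases Finset.mem_union.mp (MvPolynomial.support_sub (σ := Fin n) g' p hu) with h | h
        · exact hg' u h
        · exact (hpsupp u h).1
      have hgp2 : g' - p ∈ GleSub K 𝔧 f t' := gle_mem hkey hdegb
      have hz : g' - p = 0 := (Submodule.disjoint_def.mp hdisj') _ hgp1 hgp2
      have hg'eq : g' = p := sub_eq_zero.mp hz
      intro u hu
      rw [hg'eq] at hu
      exact hpsupp u hu
  · rintro ⟨hyp1, hyp2⟩
    refine ⟨hms, fun t ht => ⟨?_, ?_⟩⟩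
    · rw [Submodule.disjoint_def]
      intro p hp1 hp2
      have hpI : p ∈ idealG K 𝔧 f := (Submodule.mem_inf.mp hp2).1
      have hpV : p ∈ Vfull K 𝔧 f := idealG_le_V hss hms hyp1 hpI
      have hsupp : ∀ u ∈ p.support, u ∉ 𝔧 := by
        rw [spanNLE_eq] at hp1
        exact fun u hu => (hp1 u hu).1
      exact V_supp_N_eq_zero hss hms hpV hsupp
    · apply le_antisymm
      · apply sup_le
        · intro p hp
          rw [spanNLE_eq] at hp
          rw [mem_degLE]
          exact fun u hu => (hp u hu).2
        · exact inf_le_right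
      · intro p hp
        rw [mem_degLE] at hp
        have heq : p = ∑ u ∈ p.support, MvPolynomial.monomial u (MvPolynomial.coeff u p) :=
          MvPolynomial.as_sum p
        rw [heq]
        refine Submodule.sum_mem _ fun u hu => ?_
        rw [← smul_mono]
        by_cases huJ : u ∈ 𝔧
        · exact Submodule.smul_mem _ _ (mono_mem_sup hss hms hyp2 ht u huJ (hp u hu))
        · exact Submodule.smul_mem _ _ (Submodule.mem_sup_left
            (Submodule.subset_span ⟨u, ⟨huJ, hp u hu⟩, rfl⟩))

end Paper
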